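/- Let 𝒜 be a relative Rota-Baxter Lie algebra and ℬ = (M →^S B, ρ_B, ρ_M, μ) a representation of 𝒜. Then the set 𝔤(𝒜,ℬ) of pairs (d_𝒜, d_ℬ) ∈ Der(𝒜) × End(ℬ), with d_𝒜 = (d_A,d_V), d_ℬ = (d_B,d_M), satisfying d_M(ρ_M(x)m) = ρ_M(x)d_M(m) + ρ_M(d_A x)m, d_B(ρ_B(x)a) = ρ_B(x)d_B(a) + ρ_B(d_A x)a, d_M(μ(v)a) = μ(d_V v)a + μ(v)d_B(a), and d_B S = S d_M, is a Lie subalgebra of Der(𝒜 ⋉ ℬ) under the componentwise commutator bracket. -/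

import Mathlib

universe u

section
variable (K : Type u) [Field K]

/-- A relative Rota-Baxter Lie algebra: a Lie algebra `A`, a representation `rep` of `A`
on `V`, and a relative Rota-Baxter operator `T : V → A`. -/
structure RelRB (A V : Type u) [AddCommGroup A] [Module K A]
    [AddCommGroup V] [Module K V] : Type u where
  br : A →ₗ[K] A →ₗ[K] A
  skew : ∀ x y, br x y + br y x = 0
  jacobi : ∀ x y z, br x (br y z) = br (br x y) z + br y (br x z)
  rep : A →ₗ[K] Module.End K V
  rep_br : ∀ x y, rep (br x y) = rep x * rep y - rep y * rep x
  T : V →ₗ[K] A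
  rb : ∀ u v, br (T u) (T v) = T (rep (T u) v - rep (T v) u)

variable {A V B M : Type u}
  [AddCommGroup A] [Module K A] [AddCommGroup V] [Module K V]
  [AddCommGroup B] [Module K B] [AddCommGroup M] [Module K M]

/-- A representation of a relative Rota-Baxter Lie algebra `𝒜` on a 2-term complex
`M →^S B`. -/
structure RepRB (𝒜 : RelRB K A V) (B M : Type u) [AddCommGroup B] [Module K B]
    [AddCommGroup M] [Module K M] : Type u where
  S : M →ₗ[K] B
  ρB : A →ₗ[K] Module.End K B
  ρB_br : ∀ x y, ρB (𝒜.br x y) = ρB x * ρB y - ρB y * ρB x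
  ρM : A →ₗ[K] Module.End K M
  ρM_br : ∀ x y, ρM (𝒜.br x y) = ρM x * ρM y - ρM y * ρM x
  μ : V →ₗ[K] B →ₗ[K] M
  re1 : ∀ x v, μ (𝒜.rep x v) = ρM x ∘ₗ μ v - μ v ∘ₗ ρB x
  re2 : ∀ v, ρB (𝒜.T v) ∘ₗ S = S ∘ₗ ρM (𝒜.T v) + S ∘ₗ (μ v ∘ₗ S)
/-- A derivation of a relative Rota-Baxter Lie algebra. -/
def IsDer (𝒜 : RelRB K A V) (dA : Module.End K A) (dV : Module.End K V) : Prop :=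
  (∀ x y, dA (𝒜.br x y) = 𝒜.br (dA x) y + 𝒜.br x (dA y)) ∧
  (∀ v, 𝒜.T (dV v) = dA (𝒜.T v)) ∧
  (∀ x v, dV (𝒜.rep x v) = 𝒜.rep x (dV v) + 𝒜.rep (dA x) v)
/-- Membership in `𝔤(𝒜,ℬ)`: a derivation of `𝒜` together with an endomorphism pair of
`ℬ` satisfying the four compatibility conditions (Bd1)-(Bd4). -/
def GPair (𝒜 : RelRB K A V) (R : RepRB K 𝒜 B M)
    (dA : Module.End K A) (dV : Module.End K V)
    (dB : Module.End K B) (dM : Module.End K M) : Prop :=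
  IsDer K 𝒜 dA dV ∧
  (∀ x m, dM (R.ρM x m) = R.ρM x (dM m) + R.ρM (dA x) m) ∧
  (∀ x a, dB (R.ρB x a) = R.ρB x (dB a) + R.ρB (dA x) a) ∧
  (∀ v a, dM (R.μ v a) = R.μ (dV v) a + R.μ v (dB a)) ∧
  (∀ m, dB (R.S m) = R.S (dM m))

/-- Derivation conditions for a pair of plain maps with respect to plain structure
maps (used for the semidirect product). -/
def IsDerF {α β : Type u} [AddCommGroup α] [AddCommGroup β]
    (br : α → α → α) (rep : α → β → β) (Top : β → α)
    (dA : α → α) (dV : β → β) : Prop :=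
  (∀ x y, dA (br x y) = br (dA x) y + br x (dA y)) ∧
  (∀ v, dA (Top v) = Top (dV v)) ∧
  (∀ x v, dV (rep x v) = rep x (dV v) + rep (dA x) v)

/-- `𝔤(𝒜,ℬ)` is a Lie subalgebra of `Der(𝒜 ⋉ ℬ)`: it is a linear
subspace, every element gives a derivation of the semidirect product `𝒜 ⋉ ℬ`, and it is
closed under the componentwise commutator bracket. -/
theorem g_pairs_lie_subalgebra_of_der_semidirect
    (𝒜 : RelRB K A V) (R : RepRB K 𝒜 B M) :
    let br' : A × B → A × B → A × B := fun p q =>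
      (𝒜.br p.1 q.1, R.ρB p.1 q.2 - R.ρB q.1 p.2)
    let rep' : A × B → V × M → V × M := fun p u =>
      (𝒜.rep p.1 u.1, R.ρM p.1 u.2 - R.μ u.1 p.2)
    let T' : V × M → A × B := fun u => (𝒜.T u.1, R.S u.2)
    (∃ W : Submodule K
        (Module.End K A × Module.End K V × Module.End K B × Module.End K M),
      ∀ d, d ∈ W ↔ GPair K 𝒜 R d.1 d.2.1 d.2.2.1 d.2.2.2) ∧
    (∀ dA dV dB dM, GPair K 𝒜 R dA dV dB dM →
      IsDerF (br := br') (rep := rep') (Top := T')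
        (Prod.map (fun x => dA x) fun a => dB a)
        (Prod.map (fun v => dV v) fun m => dM m)) ∧
    (∀ dA dV dB dM dA' dV' dB' dM',
      GPair K 𝒜 R dA dV dB dM → GPair K 𝒜 R dA' dV' dB' dM' →
      GPair K 𝒜 R (dA * dA' - dA' * dA) (dV * dV' - dV' * dV)
        (dB * dB' - dB' * dB) (dM * dM' - dM' * dM)) := by
  intro br' rep' T'
  refine ⟨⟨{ carrier := {d | GPair K 𝒜 R d.1 d.2.1 d.2.2.1 d.2.2.2}
           , add_mem' := ?_, zero_mem' := ?_, smul_mem' := ?_}, fun d => Iff.rfl⟩, ?_, ?_⟩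
  · rintro d e ⟨⟨h1, h2, h3⟩, h4, h5, h6, h7⟩ ⟨⟨g1, g2, g3⟩, g4, g5, g6, g7⟩
    refine ⟨⟨fun x y => ?_, fun v => ?_, fun x v => ?_⟩,
      fun x m => ?_, fun x a => ?_, fun v a => ?_, fun m => ?_⟩ <;>
    simp only [Prod.fst_add, Prod.snd_add, LinearMap.add_apply, map_add,
      h1, h2, h3, h4, h5, h6, h7, g1, g2, g3, g4, g5, g6, g7] <;> abel
  · refine ⟨⟨fun x y => ?_, fun v => ?_, fun x v => ?_⟩,
      fun x m => ?_, fun x a => ?_, fun v a => ?_, fun m => ?_⟩ <;>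
    simp
  · rintro c d ⟨⟨h1, h2, h3⟩, h4, h5, h6, h7⟩
    refine ⟨⟨fun x y => ?_, fun v => ?_, fun x v => ?_⟩,
      fun x m => ?_, fun x a => ?_, fun v a => ?_, fun m => ?_⟩ <;>
    simp only [Prod.smul_fst, Prod.smul_snd, LinearMap.smul_apply, map_smul,
      h1, h2, h3, h4, h5, h6, h7, smul_add]
  · rintro dA dV dB dM ⟨⟨h1, h2, h3⟩, h4, h5, h6, h7⟩
    refine ⟨fun p q => ?_, fun u => ?_, fun p u => ?_⟩ <;>
    simp only [br', rep', T', Prod.map, map_sub, map_add,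
      h1, h2, h3, h4, h5, h6, h7, Prod.mk_add_mk, Prod.mk.injEq] <;>
    exact ⟨trivial, by abel⟩
  · rintro dA dV dB dM dA' dV' dB' dM'
      ⟨⟨h1, h2, h3⟩, h4, h5, h6, h7⟩ ⟨⟨g1, g2, g3⟩, g4, g5, g6, g7⟩
    refine ⟨⟨fun x y => ?_, fun v => ?_, fun x v => ?_⟩,
      fun x m => ?_, fun x a => ?_, fun v a => ?_, fun m => ?_⟩ <;>
    simp only [LinearMap.sub_apply, Module.End.mul_apply, map_sub, map_add,
      h1, h2, h3, h4, h5, h6, h7, g1, g2, g3, g4, g5, g6, g7] <;>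
    abel

end
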